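/- Let n ≥ 2 and m ≥ 3 be integers, let 1 ≤ a < b ≤ n, and let k be a positive integer. Then there is a unique polynomial Q ∈ ℂ[w_1,…,w_m,λ_1,…,λ_n] satisfying (λ_a − λ_b − k)·Q = ∑_{i=1}^{m} w_i·(h_i(λ_1,…,λ_n) − h_i(λ_1,…,λ_a−k,…,λ_b+k,…,λ_n)), and this polynomial Q is irreducible in ℂ[w_1,…,w_m,λ_1,…,λ_n]. -/

import Mathlib

open MvPolynomial

section AuxE

variable {A : Type*} [CommRing A]

/-- `hEl l p` is the complete homogeneous symmetric function of degree `p`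
in the entries of the list `l`. -/
def hEl : List A → ℕ → A
  | _, 0 => 1
  | [], _ + 1 => 0
  | x :: l, p + 1 => hEl l (p + 1) + x * hEl (x :: l) p
  termination_by l p => (l.length, p)

@[simp] lemma hEl_zero (l : List A) : hEl l 0 = 1 := by cases l <;> simp [hEl]

@[simp] lemma hEl_nil_succ (p : ℕ) : hEl ([] : List A) (p + 1) = 0 := by simp [hEl]

lemma hEl_cons_succ (x : A) (l : List A) (p : ℕ) :
    hEl (x :: l) (p + 1) = hEl l (p + 1) + x * hEl (x :: l) p := by rw [hEl]

lemma hEl_sub (x y : A) (l : List A) (p : ℕ) :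
    hEl (x :: l) (p + 1) - hEl (y :: l) (p + 1) = (x - y) * hEl (x :: y :: l) p := by
  induction p with
  | zero => simp [hEl_cons_succ]
  | succ q ih =>
    rw [hEl_cons_succ x l, hEl_cons_succ y l, hEl_cons_succ x (y :: l)]
    have h2 : hEl l (q + 1 + 1) + x * hEl (x :: l) (q + 1) -
        (hEl l (q + 1 + 1) + y * hEl (y :: l) (q + 1)) =
        x * (hEl (x :: l) (q + 1) - hEl (y :: l) (q + 1)) + (x - y) * hEl (y :: l) (q + 1) := by
      ring
    rw [h2, ih]
    ring

lemma hEl_swap (x y : A) (l : List A) (p : ℕ) : hEl (x :: y :: l) p = hEl (y :: x :: l) p := by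
  induction p with
  | zero => simp
  | succ q ih =>
    have h' := hEl_sub y x l q
    rw [hEl_cons_succ x (y :: l), hEl_cons_succ y (x :: l)]
    linear_combination h' + x * ih

lemma hEl_perm {l l' : List A} (h : l.Perm l') : ∀ p, hEl l p = hEl l' p := by
  induction h with
  | nil => intro p; rfl
  | cons x _ ih =>
    intro p
    induction p with
    | zero => simp
    | succ q ihq => rw [hEl_cons_succ, hEl_cons_succ, ih, ihq]
  | swap x y l => intro p; exact hEl_swap y x l p
  | trans _ _ ih1 ih2 => intro p; rw [ih1, ih2]

lemma sum_antidiagonalTuple_succ {n q : ℕ} (F : (Fin (n + 1) → ℕ) → A) :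
    ∑ d ∈ Finset.Nat.antidiagonalTuple (n + 1) q, F d =
      ∑ jr ∈ Finset.HasAntidiagonal.antidiagonal q,
        ∑ d ∈ Finset.Nat.antidiagonalTuple n jr.2, F (Fin.cons jr.1 d) := by
  rw [Finset.sum_sigma']
  refine Finset.sum_nbij'
    (fun (d : Fin (n + 1) → ℕ) =>
      (⟨(d 0, ∑ i : Fin n, d i.succ), Fin.tail d⟩ : (_ : ℕ × ℕ) × (Fin n → ℕ)))
    (fun s => Fin.cons s.1.1 s.2) ?_ ?_ ?_ ?_ ?_
  · intro d hd
    rw [Finset.Nat.mem_antidiagonalTuple] at hd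
    rw [Finset.mem_sigma]
    refine ⟨?_, ?_⟩
    · rw [Finset.HasAntidiagonal.mem_antidiagonal]
      rw [← hd, Fin.sum_univ_succ]
    · rw [Finset.Nat.mem_antidiagonalTuple]
      rfl
  · intro s hs
    rw [Finset.mem_sigma, Finset.HasAntidiagonal.mem_antidiagonal, Finset.Nat.mem_antidiagonalTuple] at hs
    rw [Finset.Nat.mem_antidiagonalTuple, Fin.sum_univ_succ]
    simp [hs.2, hs.1, Fin.cons_succ]
  · intro d _
    exact Fin.cons_self_tail d
  · intro s hs
    rw [Finset.mem_sigma, Finset.HasAntidiagonal.mem_antidiagonal, Finset.Nat.mem_antidiagonalTuple] at hs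
    refine Sigma.ext ?_ (heq_of_eq ?_)
    · simp [Fin.tail_cons, hs.2, Prod.ext_iff]
    · simp [Fin.tail_cons]
  · intro d _
    rw [Fin.cons_self_tail]

lemma G_geom {n : ℕ} (f : Fin (n + 1) → A) (q : ℕ) :
    ∑ d ∈ Finset.Nat.antidiagonalTuple (n + 1) q, ∏ i, f i ^ d i =
      ∑ jr ∈ Finset.HasAntidiagonal.antidiagonal q,
        f 0 ^ jr.1 * ∑ d ∈ Finset.Nat.antidiagonalTuple n jr.2, ∏ i, f i.succ ^ d i := by
  rw [sum_antidiagonalTuple_succ]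
  refine Finset.sum_congr rfl fun jr _ => ?_
  rw [Finset.mul_sum]
  refine Finset.sum_congr rfl fun d _ => ?_
  rw [Fin.prod_univ_succ]
  simp [Fin.cons_succ, Fin.cons_zero]

lemma G_zero {n : ℕ} (f : Fin n → A) :
    ∑ d ∈ Finset.Nat.antidiagonalTuple n 0, ∏ i, f i ^ d i = 1 := by
  rw [Finset.Nat.antidiagonalTuple_zero_right]
  simp

lemma G_succ {n : ℕ} (f : Fin (n + 1) → A) (p : ℕ) :
    ∑ d ∈ Finset.Nat.antidiagonalTuple (n + 1) (p + 1), ∏ i, f i ^ d i =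
      (∑ d ∈ Finset.Nat.antidiagonalTuple n (p + 1), ∏ i, f i.succ ^ d i) +
        f 0 * ∑ d ∈ Finset.Nat.antidiagonalTuple (n + 1) p, ∏ i, f i ^ d i := by
  rw [G_geom, G_geom f p, Finset.Nat.antidiagonal_succ, Finset.sum_cons, Finset.sum_map]
  simp only [pow_zero, one_mul]
  congr 1
  rw [Finset.mul_sum]
  refine Finset.sum_congr rfl fun jr _ => ?_
  simp [pow_succ]
  ring

lemma hEl_ofFn : ∀ {n : ℕ} (f : Fin n → A) (p : ℕ),
    hEl (List.ofFn f) p = ∑ d ∈ Finset.Nat.antidiagonalTuple n p, ∏ i, f i ^ d i := by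
  intro n
  induction n with
  | zero =>
    intro f p
    cases p with
    | zero => simp
    | succ q => simp [List.ofFn_zero, Finset.Nat.antidiagonalTuple_zero_succ]
  | succ n ih =>
    intro f p
    induction p with
    | zero => simp [G_zero]
    | succ q ihq =>
      rw [List.ofFn_succ, hEl_cons_succ, ih, ← List.ofFn_succ, ihq, G_succ]

/-- complete homogeneous symmetric function of the entries of a multiset -/
noncomputable def hEm (s : Multiset A) (p : ℕ) : A := hEl s.toList p

lemma hEm_coe (l : List A) (p : ℕ) : hEm (↑l : Multiset A) p = hEl l p :=
  hEl_perm (Multiset.coe_eq_coe.mp (Multiset.coe_toList (↑l : Multiset A))) p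

@[simp] lemma hEm_zero (s : Multiset A) : hEm s 0 = 1 := hEl_zero _

lemma hEm_sub (x y : A) (s : Multiset A) (p : ℕ) :
    hEm (x ::ₘ s) (p + 1) - hEm (y ::ₘ s) (p + 1) = (x - y) * hEm (x ::ₘ y ::ₘ s) p := by
  induction s using Quotient.inductionOn with
  | h l =>
    rw [show (⟦l⟧ : Multiset A) = (↑l : Multiset A) from rfl, Multiset.cons_coe,
      Multiset.cons_coe, Multiset.cons_coe, hEm_coe, hEm_coe, hEm_coe]
    exact hEl_sub x y l p

lemma hEl_mem {R : Type*} [CommRing R] [Algebra R A] (T : Subalgebra R A) :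
    ∀ (l : List A) (p : ℕ), (∀ x ∈ l, x ∈ T) → hEl l p ∈ T
  | l, 0, _ => by simpa using T.one_mem
  | [], _ + 1, _ => by simpa using T.zero_mem
  | x :: l, p + 1, h => by
    rw [hEl_cons_succ]
    exact add_mem (hEl_mem T l (p + 1) fun y hy => h y (List.mem_cons_of_mem x hy))
      (mul_mem (h x List.mem_cons_self) (hEl_mem T (x :: l) p h))
  termination_by l p => (l.length, p)

lemma hEm_mem {R : Type*} [CommRing R] [Algebra R A] (T : Subalgebra R A) (s : Multiset A)
    (p : ℕ) (h : ∀ x ∈ s, x ∈ T) : hEm s p ∈ T :=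
  hEl_mem T s.toList p fun x hx => h x (by rwa [← Multiset.mem_toList])

lemma univ_val_map_eq {n : ℕ} {B : Type*} (f : Fin n → B) :
    (Finset.univ.val.map f : Multiset B) = ↑(List.ofFn f) := by
  rw [List.ofFn_eq_map]
  rfl

lemma irreducible_C_mul_X_add_C' {R : Type*} [CommRing R] [IsDomain R] {c r : R}
    (hc : IsUnit c) : Irreducible (Polynomial.C c * Polynomial.X + Polynomial.C r) := by
  have hc0 : c ≠ 0 := hc.ne_zero
  have hdeg : (Polynomial.C c * Polynomial.X + Polynomial.C r).degree = 1 :=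
    Polynomial.degree_linear hc0
  have hne : (Polynomial.C c * Polynomial.X + Polynomial.C r) ≠ 0 := by
    intro h0; rw [h0] at hdeg; simp at hdeg
  constructor
  · intro hu
    have := Polynomial.degree_eq_zero_of_isUnit hu
    rw [hdeg] at this; exact one_ne_zero this
  · intro f g hfg
    have hf0 : f ≠ 0 := by rintro rfl; simp at hfg; exact hne hfg
    have hg0 : g ≠ 0 := by rintro rfl; simp at hfg; exact hne hfg
    have hnat : f.natDegree + g.natDegree = 1 := by
      have := Polynomial.natDegree_mul hf0 hg0
      rw [← hfg] at this
      have h1 : (Polynomial.C c * Polynomial.X + Polynomial.C r).natDegree = 1 :=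
        Polynomial.natDegree_eq_of_degree_eq_some hdeg
      omega
    have hlead : f.leadingCoeff * g.leadingCoeff = c := by
      have := Polynomial.leadingCoeff_mul f g
      rw [← hfg] at this
      rw [← this]
      rw [Polynomial.leadingCoeff, Polynomial.natDegree_eq_of_degree_eq_some hdeg]
      simp [Polynomial.coeff_C]
      show c * Polynomial.X.coeff 1 = c
      rw [Polynomial.coeff_X_one, mul_one]
    rcases Nat.add_eq_one_iff.mp hnat with ⟨hf, _⟩ | ⟨_, hg⟩
    · left
      rw [Polynomial.eq_C_of_natDegree_eq_zero hf]
      apply Polynomial.isUnit_C.mpr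
      have h3 : IsUnit (f.leadingCoeff * g.leadingCoeff) := hlead ▸ hc
      have h4 := isUnit_of_mul_isUnit_left h3
      rwa [Polynomial.leadingCoeff, hf] at h4
    · right
      rw [Polynomial.eq_C_of_natDegree_eq_zero hg]
      apply Polynomial.isUnit_C.mpr
      have h3 : IsUnit (f.leadingCoeff * g.leadingCoeff) := hlead ▸ hc
      have h4 := isUnit_of_mul_isUnit_right h3
      rwa [Polynomial.leadingCoeff, hg] at h4

lemma aeval_C_X_eq {R σ : Type*} [CommSemiring R] (f : MvPolynomial σ R) :
    aeval (fun s => (Polynomial.C (MvPolynomial.X s) : Polynomial (MvPolynomial σ R))) f =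
      Polynomial.C f := by
  induction f using MvPolynomial.induction_on with
  | C r => simp [algebraMap_eq, Polynomial.algebraMap_apply]
  | add p q hp hq => simp [hp, hq]
  | mul_X p s hp => simp [hp]

end AuxE

/-- The complete homogeneous symmetric polynomial of degree `p` in `n` variables. -/
noncomputable def hpoly (n p : ℕ) : MvPolynomial (Fin n) ℂ :=
  ∑ d ∈ Finset.Nat.antidiagonalTuple n p, ∏ i, X i ^ d i


lemma aeval_hpoly_eq {n p : ℕ} {S : Type*} [CommRing S] [Algebra ℂ S] (f : Fin n → S) :
    aeval f (hpoly n p) = hEm (Finset.univ.val.map f) p := by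
  rw [univ_val_map_eq, hEm_coe, hEl_ofFn]
  simp [hpoly, map_sum, map_prod]

/-- For `n ≥ 2`, `m ≥ 3`, indices `a < b` and a positive integer `k`,
there is a unique polynomial `Q` in `ℂ[w_1, …, w_m, λ_1, …, λ_n]` with
`(λ_a - λ_b - k) Q = ∑_{i=1}^m w_i (h_i(λ) - h_i(λ_1,…,λ_a-k,…,λ_b+k,…,λ_n))`,
and any such `Q` is irreducible. -/
theorem stmt2 (n m : ℕ) (hn : 2 ≤ n) (hm : 3 ≤ m) (a b : Fin n) (hab : a < b)
    (k : ℕ) (hk : 1 ≤ k) :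
    (∃! Q : MvPolynomial (Fin m ⊕ Fin n) ℂ,
        ((X (Sum.inr a) : MvPolynomial (Fin m ⊕ Fin n) ℂ) - X (Sum.inr b) - C (k : ℂ)) * Q =
          ∑ i : Fin m,
            (X (Sum.inl i) : MvPolynomial (Fin m ⊕ Fin n) ℂ) *
              (aeval (fun j : Fin n =>
                  (X (Sum.inr j) : MvPolynomial (Fin m ⊕ Fin n) ℂ))
                  (hpoly n ((i : ℕ) + 1)) -
                aeval (fun j : Fin n =>
                    if j = a then
                      (X (Sum.inr a) : MvPolynomial (Fin m ⊕ Fin n) ℂ) - C (k : ℂ)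
                    else if j = b then X (Sum.inr b) + C (k : ℂ)
                    else X (Sum.inr j))
                  (hpoly n ((i : ℕ) + 1)))) ∧
    (∀ Q : MvPolynomial (Fin m ⊕ Fin n) ℂ,
        ((X (Sum.inr a) : MvPolynomial (Fin m ⊕ Fin n) ℂ) - X (Sum.inr b) - C (k : ℂ)) * Q =
          (∑ i : Fin m,
            (X (Sum.inl i) : MvPolynomial (Fin m ⊕ Fin n) ℂ) *
              (aeval (fun j : Fin n =>
                  (X (Sum.inr j) : MvPolynomial (Fin m ⊕ Fin n) ℂ))
                  (hpoly n ((i : ℕ) + 1)) -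
                aeval (fun j : Fin n =>
                    if j = a then
                      (X (Sum.inr a) : MvPolynomial (Fin m ⊕ Fin n) ℂ) - C (k : ℂ)
                    else if j = b then X (Sum.inr b) + C (k : ℂ)
                    else X (Sum.inr j))
                  (hpoly n ((i : ℕ) + 1)))) →
        Irreducible Q) := by
  
  classical
  have hba : b ≠ a := hab.ne'
  have hab' : a ≠ b := hab.ne
  set K : MvPolynomial (Fin m ⊕ Fin n) ℂ := C (k : ℂ) with hK
  set u : MvPolynomial (Fin m ⊕ Fin n) ℂ := X (Sum.inr a) with hu
  set v : MvPolynomial (Fin m ⊕ Fin n) ℂ := X (Sum.inr b) with hv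
  set lam : Fin n → MvPolynomial (Fin m ⊕ Fin n) ℂ := fun j => X (Sum.inr j) with hlam
  set lam' : Fin n → MvPolynomial (Fin m ⊕ Fin n) ℂ :=
    fun j => if j = a then u - K else if j = b then v + K else X (Sum.inr j) with hlam'
  have hbv : b ∈ (Finset.univ.val : Multiset (Fin n)).erase a :=
    (Multiset.mem_erase_of_ne hba).mpr (Finset.mem_val.mpr (Finset.mem_univ b))
  set restIdx : Multiset (Fin n) := ((Finset.univ.val).erase a).erase b with hrestIdx
  set rest : Multiset (MvPolynomial (Fin m ⊕ Fin n) ℂ) := restIdx.map lam with hrest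
  have huniv : (Finset.univ.val : Multiset (Fin n)) = a ::ₘ b ::ₘ restIdx := by
    rw [hrestIdx, Multiset.cons_erase hbv,
      Multiset.cons_erase (Finset.mem_val.mpr (Finset.mem_univ a))]
  have hmap : Finset.univ.val.map lam = u ::ₘ v ::ₘ rest := by
    rw [huniv, Multiset.map_cons, Multiset.map_cons]
  have hmem_restIdx : ∀ j ∈ restIdx, j ≠ a ∧ j ≠ b := by
    intro j hj
    have hnd : (Finset.univ.val : Multiset (Fin n)).Nodup := Finset.univ.nodup
    rw [hrestIdx] at hj
    have h2 : j ≠ b ∧ j ∈ (Finset.univ.val).erase a :=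
      (Multiset.Nodup.mem_erase_iff (hnd.erase a)).mp hj
    have h3 : j ≠ a ∧ j ∈ Finset.univ.val :=
      (Multiset.Nodup.mem_erase_iff hnd).mp h2.2
    exact ⟨h3.1, h2.1⟩
  have hmap' : Finset.univ.val.map lam' = (u - K) ::ₘ (v + K) ::ₘ rest := by
    rw [huniv, Multiset.map_cons, Multiset.map_cons]
    have h1 : lam' a = u - K := by simp [hlam']
    have h2 : lam' b = v + K := by simp [hlam', hba]
    rw [h1, h2, hrest]
    congr 1
    congr 1
    refine Multiset.map_congr rfl fun j hj => ?_
    obtain ⟨hja, hjb⟩ := hmem_restIdx j hj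
    simp [hlam', hlam, hja, hjb]
  set gg : ℕ → MvPolynomial (Fin m ⊕ Fin n) ℂ :=
    fun p => Nat.casesOn p 0 fun r => K * hEm (u ::ₘ (v + K) ::ₘ (u - K) ::ₘ v ::ₘ rest) r
    with hgg
  have hgg0 : gg 0 = 0 := rfl
  have hggs : ∀ r, gg (r + 1) = K * hEm (u ::ₘ (v + K) ::ₘ (u - K) ::ₘ v ::ₘ rest) r :=
    fun r => rfl
  have hdelta : ∀ p : ℕ,
      hEm (u ::ₘ v ::ₘ rest) (p + 1) - hEm ((u - K) ::ₘ (v + K) ::ₘ rest) (p + 1)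
        = (u - v - K) * gg p := by
    intro p
    have e1 : ((u - K) ::ₘ v ::ₘ rest) = (v ::ₘ (u - K) ::ₘ rest) :=
      Multiset.cons_swap _ _ _
    have e3 : ((u - K) ::ₘ (v + K) ::ₘ rest) = ((v + K) ::ₘ (u - K) ::ₘ rest) :=
      Multiset.cons_swap _ _ _
    cases p with
    | zero =>
      rw [hgg0, mul_zero, e3]
      have s1 := hEm_sub u (u - K) (v ::ₘ rest) 0
      have s2 := hEm_sub v (v + K) ((u - K) ::ₘ rest) 0
      rw [← e1] at s2
      rw [hEm_zero] at s1
      rw [hEm_zero] at s2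
      linear_combination s1 + s2
    | succ r =>
      rw [hggs, e3]
      have e2 : (v ::ₘ (v + K) ::ₘ (u - K) ::ₘ rest)
          = ((v + K) ::ₘ (u - K) ::ₘ v ::ₘ rest) := by
        rw [Multiset.cons_swap v (v + K)]
        exact congrArg ((v + K) ::ₘ ·) (Multiset.cons_swap v (u - K) rest)
      have s1 := hEm_sub u (u - K) (v ::ₘ rest) (r + 1)
      have s2 := hEm_sub v (v + K) ((u - K) ::ₘ rest) (r + 1)
      rw [← e1] at s2
      rw [e2] at s2
      have s3 := hEm_sub u (v + K) ((u - K) ::ₘ v ::ₘ rest) r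
      linear_combination s1 + s2 + K * s3
  have heval : ∀ q, (aeval lam) (hpoly n q) = hEm (u ::ₘ v ::ₘ rest) q := by
    intro q; rw [aeval_hpoly_eq, hmap]
  have heval' : ∀ q, (aeval lam') (hpoly n q) = hEm ((u - K) ::ₘ (v + K) ::ₘ rest) q := by
    intro q; rw [aeval_hpoly_eq, hmap']
  set Q0 : MvPolynomial (Fin m ⊕ Fin n) ℂ := ∑ i : Fin m, X (Sum.inl i) * gg (i : ℕ) with hQ0
  have hRHS : (∑ i : Fin m, X (Sum.inl i) *
      ((aeval lam) (hpoly n ((i : ℕ) + 1)) - (aeval lam') (hpoly n ((i : ℕ) + 1))))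
      = (u - v - K) * Q0 := by
    rw [hQ0, Finset.mul_sum]
    refine Finset.sum_congr rfl fun i _ => ?_
    rw [heval, heval', hdelta]
    ring
  rw [hRHS]
  have hD0 : (u - v - K) ≠ 0 := by
    intro h0
    have h1 := congrArg
      (eval (Sum.elim (fun _ => (0 : ℂ)) (fun j => if j = a then (k : ℂ) + 1 else 0))) h0
    rw [hu, hv, hK] at h1
    simp only [map_sub, eval_X, eval_C, Sum.elim_inr, map_zero] at h1
    rw [if_neg hba] at h1
    simp at h1
  set i1 : Fin m := ⟨1, by omega⟩ with hi1
  have hgg1 : gg (i1 : ℕ) = K := by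
    have h6 : gg (i1 : ℕ) = K * hEm (u ::ₘ (v + K) ::ₘ (u - K) ::ₘ v ::ₘ rest) 0 := rfl
    rw [h6, hEm_zero, mul_one]
  have hsplit : Q0 = K * X (Sum.inl i1) +
      ∑ i ∈ Finset.univ.erase i1, X (Sum.inl i) * gg (i : ℕ) := by
    rw [hQ0, ← Finset.add_sum_erase _ _ (Finset.mem_univ i1), hgg1,
      mul_comm (X (Sum.inl i1)) K]
  have hSsup : (∑ i ∈ Finset.univ.erase i1, X (Sum.inl i) * gg (i : ℕ))
      ∈ supported ℂ {w : Fin m ⊕ Fin n | w ≠ Sum.inl i1} := by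
    apply Subalgebra.sum_mem
    intro i hi
    have hii1 : i ≠ i1 := (Finset.mem_erase.mp hi).1
    have hXr : ∀ j : Fin n, (X (Sum.inr j) : MvPolynomial (Fin m ⊕ Fin n) ℂ)
        ∈ supported ℂ {w : Fin m ⊕ Fin n | w ≠ Sum.inl i1} :=
      fun j => X_mem_supported.mpr (by simp)
    have hKmem : K ∈ supported ℂ {w : Fin m ⊕ Fin n | w ≠ Sum.inl i1} := by
      rw [hK, ← algebraMap_eq]; exact Subalgebra.algebraMap_mem _ _
    apply mul_mem
    · refine X_mem_supported.mpr ?_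
      intro h
      exact hii1 (Sum.inl_injective h)
    · cases hc : (i : ℕ) with
      | zero => rw [hgg0]; exact zero_mem _
      | succ r =>
        rw [hggs]
        refine mul_mem hKmem (hEm_mem _ _ _ ?_)
        intro x hx
        simp only [Multiset.mem_cons] at hx
        rcases hx with rfl | rfl | rfl | rfl | hx
        · rw [hu]; exact hXr a
        · exact add_mem (by rw [hv]; exact hXr b) hKmem
        · exact sub_mem (by rw [hu]; exact hXr a) hKmem
        · rw [hv]; exact hXr b
        · rw [hrest] at hx
          obtain ⟨j, hj, rfl⟩ := Multiset.mem_map.mp hx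
          simp only [hlam]
          exact hXr j
  rw [supported_eq_range_rename, AlgHom.mem_range] at hSsup
  obtain ⟨S', hS'⟩ := hSsup
  set e : (Fin m ⊕ Fin n) ≃ Option ({w : Fin m ⊕ Fin n | w ≠ Sum.inl i1} : Set _) :=
    (Equiv.optionSubtypeNe (Sum.inl i1)).symm with he
  set Φ := (renameEquiv ℂ e).trans
    (optionEquivLeft ℂ ({w : Fin m ⊕ Fin n | w ≠ Sum.inl i1} : Set _)) with hΦ
  have hkC : IsUnit (C (k : ℂ) :
      MvPolynomial ({w : Fin m ⊕ Fin n | w ≠ Sum.inl i1} : Set _) ℂ) := by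
    refine IsUnit.map (C : ℂ →+* _) (Ne.isUnit ?_)
    exact Nat.cast_ne_zero.mpr (by omega)
  have hΦQ : Φ Q0 = Polynomial.C (C (k : ℂ)) * Polynomial.X + Polynomial.C S' := by
    rw [hsplit, map_add, map_mul]
    refine congrArg₂ (· + ·) ?_ ?_
    · refine congrArg₂ (· * ·) ?_ ?_
      · rw [hK]
        show (optionEquivLeft ℂ _) ((renameEquiv ℂ e) (C (k : ℂ))) = _
        rw [renameEquiv_apply, rename_C, optionEquivLeft_C]
      · show (optionEquivLeft ℂ _) ((renameEquiv ℂ e) (X (Sum.inl i1))) = _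
        rw [renameEquiv_apply, rename_X]
        have hnone : e (Sum.inl i1) = none := Equiv.optionSubtypeNe_symm_self _
        rw [hnone, optionEquivLeft_X_none]
    · rw [← hS']
      show (optionEquivLeft ℂ _) ((renameEquiv ℂ e) ((rename Subtype.val) S')) = _
      rw [renameEquiv_apply, rename_rename]
      have hcomp : (⇑e ∘ (Subtype.val : ({w : Fin m ⊕ Fin n | w ≠ Sum.inl i1} : Set _) →
          (Fin m ⊕ Fin n)) : _ → Option _) = some := by
        funext t
        show e t.val = some t
        rw [he]
        have h5 := Equiv.optionSubtypeNe_symm_of_ne t.2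
        exact h5
      rw [hcomp, optionEquivLeft_apply, aeval_rename]
      exact aeval_C_X_eq S'
  have hQirr : Irreducible Q0 := by
    have h2 : Irreducible (Φ Q0) := by
      rw [hΦQ]; exact irreducible_C_mul_X_add_C' hkC
    exact (MulEquiv.irreducible_iff Φ).mp h2
  refine ⟨⟨Q0, rfl, fun y hy => mul_left_cancel₀ hD0 hy⟩, ?_⟩
  intro Q hQ
  have hQQ0 : Q = Q0 := mul_left_cancel₀ hD0 hQ
  rw [hQQ0]
  exact hQirr
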